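/- For ε ≥ 0, the image of the moment map (μ₁, μ₂) = (−z, (ε/4)(x²+y²) + (1/2)∑_j (r_j + z − c_j)) on ℝ³ is exactly the convex region {(μ₁, μ₂) ∈ ℝ² : μ₂ + ∑_{j=1}^k (μ₁ + c_j) ≥ 0 for all k = 0, 1, ..., n}. -/

import Mathlib

private lemma abs_le_sqrt_aux (x y a : ℝ) : |a| ≤ Real.sqrt (x^2 + y^2 + a^2) := by
  rw [← Real.sqrt_sq_eq_abs]
  apply Real.sqrt_le_sqrt; nlinarith [sq_nonneg x, sq_nonneg y]


/-- For `ε ≥ 0`, the image of the moment map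
`(μ₁,μ₂) = (−z, (ε/4)(x²+y²) + (1/2)∑_j (r_j + z − c_j))` on `ℝ³` is exactly the convex
region `{(μ₁,μ₂) : μ₂ + ∑_{j=1}^k (μ₁+c_j) ≥ 0, k = 0,…,n}`. -/
theorem moment_map_image_eq
    (n : ℕ) (hn : 1 ≤ n) (c : ℕ → ℝ)
    (hc : ∀ i j : ℕ, i < j → j < n → c i < c j)
    (ε : ℝ) (hε : 0 ≤ ε) :
    {m : ℝ × ℝ | ∃ x y z : ℝ, m.1 = -z ∧
        m.2 = ε / 4 * (x ^ 2 + y ^ 2) + (1 / 2) * ∑ j ∈ Finset.range n,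
          (Real.sqrt (x ^ 2 + y ^ 2 + (z - c j) ^ 2) + z - c j)} =
    {m : ℝ × ℝ | ∀ k ≤ n, 0 ≤ m.2 + ∑ j ∈ Finset.range k, (m.1 + c j)} := by
  ext m
  simp only [Set.mem_setOf_eq]
  constructor
  · rintro ⟨x, y, z, h1, h2⟩ k hk
    have hr : ∀ j, |z - c j| ≤ Real.sqrt (x^2 + y^2 + (z - c j)^2) := fun j =>
      abs_le_sqrt_aux x y _
    have hsplit : ∑ j ∈ Finset.range n,
        (Real.sqrt (x ^ 2 + y ^ 2 + (z - c j) ^ 2) + z - c j)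
        = ∑ j ∈ Finset.range k,
            (Real.sqrt (x ^ 2 + y ^ 2 + (z - c j) ^ 2) + z - c j)
          + ∑ j ∈ Finset.Ico k n,
            (Real.sqrt (x ^ 2 + y ^ 2 + (z - c j) ^ 2) + z - c j) := by
      rw [Finset.range_eq_Ico, ← Finset.sum_Ico_consecutive _ (Nat.zero_le k) hk, Finset.range_eq_Ico]
    rw [h1, h2, hsplit]
    have hA : 0 ≤ ∑ j ∈ Finset.range k,
        ((1:ℝ)/2 * (Real.sqrt (x ^ 2 + y ^ 2 + (z - c j) ^ 2) + z - c j) + (-z + c j)) := by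
      apply Finset.sum_nonneg
      intro j _
      nlinarith [hr j, le_abs_self (z - c j)]
    have hB : 0 ≤ ∑ j ∈ Finset.Ico k n,
        (Real.sqrt (x ^ 2 + y ^ 2 + (z - c j) ^ 2) + z - c j) := by
      apply Finset.sum_nonneg
      intro j _
      nlinarith [hr j, neg_abs_le (z - c j)]
    have hε' : 0 ≤ ε / 4 * (x ^ 2 + y ^ 2) := by positivity
    have := Finset.sum_add_distrib (s := Finset.range k)
      (f := fun j => (1:ℝ)/2 * (Real.sqrt (x ^ 2 + y ^ 2 + (z - c j) ^ 2) + z - c j))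
      (g := fun j => -z + c j)
    rw [this, ← Finset.mul_sum] at hA
    linarith [hA, hB]
  · intro h
    set z : ℝ := -m.1 with hz
    set μ : ℝ := m.2 with hμ
    -- define k₀
    set S : Finset ℕ := (Finset.range n).filter (fun j => c j < z) with hS
    set k₀ : ℕ := S.card with hk₀
    have hk₀n : k₀ ≤ n := by
      calc S.card ≤ (Finset.range n).card := Finset.card_filter_le _ _
        _ = n := Finset.card_range n
    have hmem : ∀ j < n, (c j < z ↔ j < k₀) := by
      intro j hj
      constructor
      · intro hcj
        have hsub : Finset.range (j+1) ⊆ S := by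
          intro i hi
          rw [Finset.mem_range] at hi
          rw [hS, Finset.mem_filter, Finset.mem_range]
          refine ⟨lt_of_le_of_lt (Nat.lt_succ_iff.mp hi) hj, ?_⟩
          rcases lt_or_eq_of_le (Nat.lt_succ_iff.mp hi) with h' | h'
          · exact lt_trans (hc i j h' hj) hcj
          · rwa [h']
        have := Finset.card_le_card hsub
        simpa [Finset.card_range] using this
      · intro hjk
        by_contra hcj
        push_neg at hcj
        have hsub : S ⊆ Finset.range j := by
          intro i hi
          rw [hS, Finset.mem_filter, Finset.mem_range] at hi
          rw [Finset.mem_range]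
          by_contra hij
          push_neg at hij
          rcases lt_or_eq_of_le hij with h' | h'
          · exact absurd (lt_trans (hc j i h' hi.1) hi.2) (not_lt.mpr hcj)
          · exact absurd hi.2 (not_lt.mpr (h' ▸ hcj))
        have := Finset.card_le_card hsub
        rw [Finset.card_range] at this
        omega
    -- f
    set f : ℝ → ℝ := fun ρ => ε/4 * ρ + (1/2) * ∑ j ∈ Finset.range n,
      (Real.sqrt (ρ + (z - c j)^2) + z - c j) with hf
    have hcont : Continuous f := by fun_prop
    -- f 0 ≤ μ
    have hf0 : f 0 = ∑ j ∈ Finset.range k₀, (z - c j) := by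
      rw [hf]
      simp only [zero_add, Real.sqrt_sq_eq_abs]
      rw [Finset.range_eq_Ico, ← Finset.sum_Ico_consecutive _ (Nat.zero_le k₀) hk₀n,
        ← Finset.range_eq_Ico]
      have h1 : ∑ j ∈ Finset.range k₀, (|z - c j| + z - c j)
          = ∑ j ∈ Finset.range k₀, (2 * (z - c j)) := by
        apply Finset.sum_congr rfl
        intro j hj
        rw [Finset.mem_range] at hj
        have : c j < z := (hmem j (lt_of_lt_of_le hj hk₀n)).mpr hj
        rw [abs_of_pos (by linarith)]; ring
      have h2 : ∑ j ∈ Finset.Ico k₀ n, (|z - c j| + z - c j) = 0 := by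
        apply Finset.sum_eq_zero
        intro j hj
        rw [Finset.mem_Ico] at hj
        have : ¬ c j < z := fun hcj => absurd ((hmem j hj.2).mp hcj) (not_lt.mpr hj.1)
        rw [abs_of_nonpos (by linarith)]; ring
      rw [h1, h2, add_zero, mul_zero, zero_add, Finset.mul_sum]
      exact Finset.sum_congr rfl (fun j _ => by ring)
    have hf0le : f 0 ≤ μ := by
      have := h k₀ hk₀n
      rw [hf0]
      have hsum : ∑ j ∈ Finset.range k₀, (m.1 + c j)
          = - ∑ j ∈ Finset.range k₀, (z - c j) := by
        rw [← Finset.sum_neg_distrib]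
        apply Finset.sum_congr rfl
        intro j _
        rw [hz]; ring
      rw [hsum] at this
      linarith
    -- big R
    set t : ℝ := max 0 (2*μ - z + c 0) with ht
    have ht0 : 0 ≤ t := le_max_left _ _
    set R : ℝ := t^2 with hR
    have hR0 : 0 ≤ R := sq_nonneg t
    have hfR : μ ≤ f R := by
      have hsqrtR : Real.sqrt R = t := by rw [hR, Real.sqrt_sq ht0]
      have hterm0 : Real.sqrt R + z - c 0 ≤ Real.sqrt (R + (z - c 0)^2) + z - c 0 := by
        have : Real.sqrt R ≤ Real.sqrt (R + (z - c 0)^2) := by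
          apply Real.sqrt_le_sqrt; nlinarith [sq_nonneg (z - c 0)]
        linarith
      have hsingle : Real.sqrt (R + (z - c 0)^2) + z - c 0
          ≤ ∑ j ∈ Finset.range n, (Real.sqrt (R + (z - c j)^2) + z - c j) := by
        apply Finset.single_le_sum (f := fun j => Real.sqrt (R + (z - c j)^2) + z - c j)
        · intro j _
          have h1 : |z - c j| ≤ Real.sqrt (R + (z - c j)^2) := by
            rw [← Real.sqrt_sq_eq_abs]
            apply Real.sqrt_le_sqrt; linarith
          nlinarith [neg_abs_le (z - c j)]
        · exact Finset.mem_range.mpr hn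
      have hεR : 0 ≤ ε/4 * R := by positivity
      have : 2*μ ≤ t + z - c 0 := by
        have := le_max_right 0 (2*μ - z + c 0)
        linarith
      rw [hf]
      rw [hsqrtR] at hterm0
      linarith
    -- IVT
    have hIcc : (0:ℝ) ≤ R := hR0
    have := intermediate_value_Icc hIcc hcont.continuousOn
    have hμmem : μ ∈ Set.Icc (f 0) (f R) := ⟨hf0le, hfR⟩
    obtain ⟨ρ, hρmem, hρ⟩ := this hμmem
    refine ⟨Real.sqrt ρ, 0, z, by rw [hz]; ring, ?_⟩
    have hρ0 : 0 ≤ ρ := hρmem.1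
    have hxy : Real.sqrt ρ ^ 2 + (0:ℝ) ^ 2 = ρ := by
      rw [Real.sq_sqrt hρ0]; ring
    rw [← hρ, hf]
    rw [hxy]
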